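/- Let u, v, w be three vertices such that v and w are consecutive vertices along a canonical path of u in the negative cone C̄ᵘᵢ. Then w does not lie in the positive cone Cᵛᵢ nor in the negative cone C̄ᵛᵢ of v. -/

import Mathlib

open Real Set

noncomputable section

namespace CHT6

/-- Points in the plane. -/
abbrev Pt := ℝ × ℝ

/-- Euclidean distance. -/
def dst (p q : Pt) : ℝ := Real.sqrt ((p.1 - q.1) ^ 2 + (p.2 - q.2) ^ 2)

/-- Unsigned angle at `q` between segments `qp` and `qr`. -/
def ang (p q r : Pt) : ℝ :=
  Real.arccos (((p.1 - q.1) * (r.1 - q.1) + (p.2 - q.2) * (r.2 - q.2)) / (dst p q * dst r q))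

/-- 2D cross product. -/
def crossP (a b : Pt) : ℝ := a.1 * b.2 - a.2 * b.1

/-- The segments `ab` and `cd` properly cross: their relative interiors meet. -/
def PCross (a b c d : Pt) : Prop := (openSegment ℝ a b ∩ openSegment ℝ c d).Nonempty

/-- `uz` is a constraint of `S`. -/
def Constr (S : Set (Pt × Pt)) (u z : Pt) : Prop := (u, z) ∈ S ∨ (z, u) ∈ S

/-- `u` and `v` see each other: `uv` is a constraint or no constraint properly crosses it. -/
def CanSee (S : Set (Pt × Pt)) (u v : Pt) : Prop :=
  Constr S u v ∨ ∀ c ∈ S, ¬ PCross c.1 c.2 u v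

/-- Rotation of the plane by angle `θ` about the origin. -/
def rot (θ : ℝ) (p : Pt) : Pt :=
  (Real.cos θ * p.1 - Real.sin θ * p.2, Real.sin θ * p.1 + Real.cos θ * p.2)

/-- `p` relative to `u`, rotated so that the positive cone `Cᵢ` becomes the upward cone. -/
def rel (i : ℕ) (u p : Pt) : Pt := rot (-(2 * Real.pi * i / 3)) (p - u)

/-- `p` lies in the (open) positive cone `Cᵢ` of `u` (width π/3; `C₀` is upward vertical). -/
def inPos (i : ℕ) (u p : Pt) : Prop := Real.sqrt 3 * |(rel i u p).1| < (rel i u p).2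

/-- `p` lies in the negative cone `C̄ᵢ` of `u`. -/
def inNeg (i : ℕ) (u p : Pt) : Prop := inPos i p u

/-- Length of the projection of `p` onto the bisector of the positive cone `Cᵢ` of `u`. -/
def projLen (i : ℕ) (u p : Pt) : ℝ := (rel i u p).2

/-- Projected distance of `p` from `u` for the negative cone `C̄ᵢ` of `u`. -/
def negProj (i : ℕ) (u p : Pt) : ℝ := projLen i p u

/-- `p` and `q` are not strictly separated, within the cone `cone` at `u`, by a constraint
incident to `u`: they lie in a common (closed) subcone. -/
def SameSubIn (cone : Pt → Pt → Prop) (S : Set (Pt × Pt)) (u p q : Pt) : Prop :=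
  ∀ z, Constr S u z → cone u z →
    ¬ (crossP (z - u) (p - u) * crossP (z - u) (q - u) < 0)

def SameSubPos (S : Set (Pt × Pt)) (i : ℕ) (u p q : Pt) : Prop := SameSubIn (inPos i) S u p q

def SameSubNeg (S : Set (Pt × Pt)) (i : ℕ) (u p q : Pt) : Prop := SameSubIn (inNeg i) S u p q

/-- General position: no two points of `P` define a line parallel to one of the six cone rays
(slopes `0`, `√3`, `-√3`), and no three points of `P` are collinear. -/
def GenPos (P : Set Pt) : Prop :=
  (∀ p ∈ P, ∀ q ∈ P, p ≠ q →
    p.2 ≠ q.2 ∧ q.2 - p.2 ≠ Real.sqrt 3 * (q.1 - p.1) ∧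
      q.2 - p.2 ≠ -(Real.sqrt 3 * (q.1 - p.1))) ∧
  (∀ p ∈ P, ∀ q ∈ P, ∀ r ∈ P, p ≠ q → q ≠ r → p ≠ r → ¬ Collinear ℝ ({p, q, r} : Set Pt))

/-- `v` is, among the vertices visible from `u` in the positive subcone of `u` containing `v`,
the one minimizing the projection onto the cone bisector: `u` adds the edge `uv`. -/
def EdgeDir (P : Set Pt) (S : Set (Pt × Pt)) (u v : Pt) : Prop :=
  u ∈ P ∧ v ∈ P ∧ ∃ i < 3, inPos i u v ∧ CanSee S u v ∧
    ∀ w ∈ P, w ≠ u → inPos i u w → CanSee S u w → SameSubPos S i u v w →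
      projLen i u v ≤ projLen i u w

/-- Edges of the constrained half-θ₆-graph. -/
def HEdge (P : Set Pt) (S : Set (Pt × Pt)) (u v : Pt) : Prop :=
  EdgeDir P S u v ∨ EdgeDir P S v u

/-- `f` is a path in the graph with edge relation `E`. -/
def IsPath (E : Pt → Pt → Prop) {n : ℕ} (f : Fin (n + 1) → Pt) : Prop :=
  ∀ j : Fin n, E (f j.castSucc) (f j.succ)

/-- Euclidean length of a polygonal path. -/
def pathLen {n : ℕ} (f : Fin (n + 1) → Pt) : ℝ :=
  ∑ j : Fin n, dst (f j.castSucc) (f j.succ)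

/-- `x` is a vertex of the canonical sequence of `u` in the negative cone `C̄ᵘᵢ`. -/
def CanonVert (P : Set Pt) (S : Set (Pt × Pt)) (i : ℕ) (u x : Pt) : Prop :=
  x ∈ P ∧ HEdge P S u x ∧ inNeg i u x

/-- `v` and `w` are consecutive (in counterclockwise order) vertices of the canonical path of
`u` in a subcone of the negative cone `C̄ᵘᵢ`. -/
def ConsecCanon (P : Set Pt) (S : Set (Pt × Pt)) (i : ℕ) (u v w : Pt) : Prop :=
  CanonVert P S i u v ∧ CanonVert P S i u w ∧ SameSubNeg S i u v w ∧
  crossP (v - u) (w - u) > 0 ∧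
  ∀ x ∈ P, CanonVert P S i u x → SameSubNeg S i u v x →
    ¬ (crossP (v - u) (x - u) > 0 ∧ crossP (x - u) (w - u) > 0)

/-- `x` is a closest canonical vertex of `u` in (a subcone of) the negative cone `C̄ᵘᵢ`,
distances being measured by projection onto the cone bisector. -/
def ClosestCanon (P : Set Pt) (S : Set (Pt × Pt)) (i : ℕ) (u x : Pt) : Prop :=
  CanonVert P S i u x ∧
  ∀ y ∈ P, CanonVert P S i u y → SameSubNeg S i u x y → negProj i u x ≤ negProj i u y

/-- Edges of the bounded-degree graph `G₉`: canonical-path edges together with, for each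
negative subcone, the edge to the closest canonical vertex. -/
def G9Edge (P : Set Pt) (S : Set (Pt × Pt)) (a b : Pt) : Prop :=
  (∃ u ∈ P, ∃ i < 3, ConsecCanon P S i u a b ∨ ConsecCanon P S i u b a) ∨
  (∃ i < 3, ClosestCanon P S i a b ∨ ClosestCanon P S i b a)

/-- Coordinate of `p` along the right boundary direction `(1/2, √3/2)` of the upward cone. -/
def coordA (p : Pt) : ℝ := p.1 + p.2 / Real.sqrt 3

/-- Coordinate of `p` along the left boundary direction `(-1/2, √3/2)` of the upward cone. -/
def coordB (p : Pt) : ℝ := -p.1 + p.2 / Real.sqrt 3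

end CHT6

namespace CHT6


/-! ### Auxiliary machinery -/

private lemma sqrt3_pos : (0:ℝ) < Real.sqrt 3 := Real.sqrt_pos.mpr (by norm_num)

private lemma sqrt3_sq : Real.sqrt 3 * Real.sqrt 3 = 3 := Real.mul_self_sqrt (by norm_num)

/-- membership in the open upward cone, as a predicate on vectors -/
private def cvec (x : Pt) : Prop := Real.sqrt 3 * |x.1| < x.2

private lemma inPos_def {i : ℕ} {c p : Pt} : inPos i c p ↔ cvec (rel i c p) := Iff.rfl

private lemma cvec_pos {x : Pt} (h : cvec x) : 0 < x.2 :=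
  lt_of_le_of_lt (by positivity) h

private lemma crossP_rot (θ : ℝ) (a b : Pt) : crossP (rot θ a) (rot θ b) = crossP a b := by
  simp only [crossP, rot]
  linear_combination (a.1 * b.2 - a.2 * b.1) * (Real.sin_sq_add_cos_sq θ)

private lemma rot_add (θ : ℝ) (a b : Pt) : rot θ (a + b) = rot θ a + rot θ b := by
  simp only [rot, Prod.fst_add, Prod.snd_add, Prod.mk_add_mk, Prod.mk.injEq]
  exact ⟨by ring, by ring⟩

private lemma rot_smul (θ : ℝ) (t : ℝ) (a : Pt) : rot θ (t • a) = t • rot θ a := by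
  simp only [rot, Prod.smul_fst, Prod.smul_snd, smul_eq_mul, Prod.smul_mk, Prod.mk.injEq]
  exact ⟨by ring, by ring⟩

private lemma rot_neg (θ : ℝ) (a : Pt) : rot θ (-a) = - rot θ a := by
  simp only [rot, Prod.fst_neg, Prod.snd_neg, Prod.neg_mk, Prod.mk.injEq]
  exact ⟨by ring, by ring⟩

private lemma rot_rot (α β : ℝ) (p : Pt) : rot α (rot β p) = rot (α + β) p := by
  simp only [rot, Real.cos_add, Real.sin_add, Prod.mk.injEq]
  exact ⟨by ring, by ring⟩

private lemma rel_sub (i : ℕ) (c p q : Pt) : rel i c p - rel i c q = rel i q p := by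
  simp only [rel, rot, Prod.fst_sub, Prod.snd_sub, Prod.mk_sub_mk, Prod.mk.injEq]
  exact ⟨by ring, by ring⟩

private lemma rel_neg' (i : ℕ) (p c : Pt) : rel i p c = - rel i c p := by
  simp only [rel, rot, Prod.fst_sub, Prod.snd_sub, Prod.neg_mk, Prod.mk.injEq]
  exact ⟨by ring, by ring⟩

private lemma rel_add' (i : ℕ) (a b c : Pt) : rel i a c = rel i a b + rel i b c := by
  simp only [rel, rot, Prod.fst_sub, Prod.snd_sub, Prod.mk_add_mk, Prod.mk.injEq]
  exact ⟨by ring, by ring⟩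

private lemma projLen_add (i : ℕ) (a b c : Pt) :
    projLen i a c = projLen i a b + projLen i b c := by
  simp only [projLen, rel_add' i a b c, Prod.snd_add]

private lemma projLen_anti (i : ℕ) (a b : Pt) : projLen i a b = - projLen i b a := by
  rw [projLen, projLen, rel_neg' i b a, Prod.snd_neg, neg_neg]

private lemma projLen_pos {i : ℕ} {a b : Pt} (h : inPos i a b) : 0 < projLen i a b :=
  cvec_pos h

private lemma inPos_ne {i : ℕ} {c p : Pt} (h : inPos i c p) : p ≠ c := by
  rintro rfl
  have : rel i p p = (0, 0) := by simp [rel, rot]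
  rw [inPos_def, this] at h
  simp [cvec] at h

private lemma cvec_comb {X Y : Pt} {s t : ℝ} (hX : cvec X) (hY : cvec Y)
    (hs : 0 < s) (ht : 0 < t) : cvec (s • X + t • Y) := by
  have hX' : Real.sqrt 3 * |X.1| < X.2 := hX
  have hY' : Real.sqrt 3 * |Y.1| < Y.2 := hY
  show Real.sqrt 3 * |(s • X + t • Y).1| < (s • X + t • Y).2
  simp only [Prod.fst_add, Prod.snd_add, Prod.smul_fst, Prod.smul_snd, smul_eq_mul]
  have h1 : |s * X.1 + t * Y.1| ≤ s * |X.1| + t * |Y.1| := by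
    calc |s * X.1 + t * Y.1| ≤ |s * X.1| + |t * Y.1| := abs_add_le _ _
    _ = s * |X.1| + t * |Y.1| := by rw [abs_mul, abs_mul, abs_of_pos hs, abs_of_pos ht]
  have h2 := mul_le_mul_of_nonneg_left h1 sqrt3_pos.le
  nlinarith [mul_lt_mul_of_pos_left hX' hs, mul_lt_mul_of_pos_left hY' ht]

/-! rotation by multiples of 2π/3 -/

private def expP (x : Pt) : Pt := (-x.1/2 - Real.sqrt 3 * x.2/2, Real.sqrt 3 * x.1/2 - x.2/2)
private def expM (x : Pt) : Pt := (-x.1/2 + Real.sqrt 3 * x.2/2, -(Real.sqrt 3 * x.1/2) - x.2/2)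

private lemma cos_2pi3 : Real.cos (2*Real.pi/3) = -(1/2) := by
  have : (2*Real.pi/3) = Real.pi - Real.pi/3 := by ring
  rw [this, Real.cos_pi_sub, Real.cos_pi_div_three]

private lemma sin_2pi3 : Real.sin (2*Real.pi/3) = Real.sqrt 3 / 2 := by
  have : (2*Real.pi/3) = Real.pi - Real.pi/3 := by ring
  rw [this, Real.sin_pi_sub, Real.sin_pi_div_three]

private lemma cos_4pi3 : Real.cos (4*Real.pi/3) = -(1/2) := by
  have : (4*Real.pi/3) = Real.pi + Real.pi/3 := by ring
  rw [this, Real.cos_add, Real.cos_pi, Real.sin_pi, Real.cos_pi_div_three]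
  ring

private lemma sin_4pi3 : Real.sin (4*Real.pi/3) = -(Real.sqrt 3 / 2) := by
  have : (4*Real.pi/3) = Real.pi + Real.pi/3 := by ring
  rw [this, Real.sin_add, Real.cos_pi, Real.sin_pi, Real.sin_pi_div_three]
  ring

private lemma rot_p1 (x : Pt) : rot (2*Real.pi/3) x = expP x := by
  simp only [rot, expP, cos_2pi3, sin_2pi3, Prod.mk.injEq]
  exact ⟨by ring, by ring⟩

private lemma rot_p2 (x : Pt) : rot (4*Real.pi/3) x = expM x := by
  simp only [rot, expM, cos_4pi3, sin_4pi3, Prod.mk.injEq]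
  exact ⟨by ring, by ring⟩

private lemma rot_m1 (x : Pt) : rot (-(2*Real.pi/3)) x = expM x := by
  simp only [rot, Real.cos_neg, Real.sin_neg, expM, cos_2pi3, sin_2pi3, Prod.mk.injEq]
  exact ⟨by ring, by ring⟩

private lemma rot_m2 (x : Pt) : rot (-(4*Real.pi/3)) x = expP x := by
  simp only [rot, Real.cos_neg, Real.sin_neg, expP, cos_4pi3, sin_4pi3, Prod.mk.injEq]
  exact ⟨by ring, by ring⟩

private lemma cvec_not_neg {x : Pt} (h : cvec x) : ¬ cvec (-x) := by
  intro h'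
  have h1 := cvec_pos h
  have h2 := cvec_pos h'
  simp only [Prod.snd_neg] at h2
  linarith

private lemma cvec_not_P {x : Pt} (h : cvec x) : ¬ cvec (expP x) := by
  intro h'
  have h2 := cvec_pos h'
  simp only [expP] at h2
  have h3 : Real.sqrt 3 * x.1 ≤ Real.sqrt 3 * |x.1| :=
    mul_le_mul_of_nonneg_left (le_abs_self _) sqrt3_pos.le
  have hx : Real.sqrt 3 * |x.1| < x.2 := h
  linarith

private lemma cvec_not_M {x : Pt} (h : cvec x) : ¬ cvec (expM x) := by
  intro h'
  have h2 := cvec_pos h'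
  simp only [expM] at h2
  have h3 : Real.sqrt 3 * (-x.1) ≤ Real.sqrt 3 * |x.1| :=
    mul_le_mul_of_nonneg_left (neg_le_abs _) sqrt3_pos.le
  have hx : Real.sqrt 3 * |x.1| < x.2 := h
  linarith

private lemma cvec_not_negP {x : Pt} (h : cvec x) : ¬ cvec (-(expP x)) := by
  intro h'
  have hx : Real.sqrt 3 * |x.1| < x.2 := h
  simp only [cvec, expP, Prod.fst_neg, Prod.snd_neg] at h'
  have h3 : Real.sqrt 3 * (x.1/2 + Real.sqrt 3 * x.2/2) ≤
      Real.sqrt 3 * |(-(-x.1/2 - Real.sqrt 3 * x.2/2))| := by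
    apply mul_le_mul_of_nonneg_left _ sqrt3_pos.le
    refine le_trans (le_of_eq ?_) (le_abs_self _)
    ring
  have key : Real.sqrt 3 * (x.1/2 + Real.sqrt 3 * x.2/2)
      = Real.sqrt 3 * x.1/2 + 3 * x.2/2 := by
    linear_combination (x.2/2) * sqrt3_sq
  have h4 : Real.sqrt 3 * (-x.1) ≤ Real.sqrt 3 * |x.1| :=
    mul_le_mul_of_nonneg_left (neg_le_abs _) sqrt3_pos.le
  linarith

private lemma cvec_not_negM {x : Pt} (h : cvec x) : ¬ cvec (-(expM x)) := by
  intro h'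
  have hx : Real.sqrt 3 * |x.1| < x.2 := h
  simp only [cvec, expM, Prod.fst_neg, Prod.snd_neg] at h'
  have h3 : Real.sqrt 3 * (-x.1/2 + Real.sqrt 3 * x.2/2) ≤
      Real.sqrt 3 * |(-(-x.1/2 + Real.sqrt 3 * x.2/2))| := by
    apply mul_le_mul_of_nonneg_left _ sqrt3_pos.le
    refine le_trans (le_of_eq ?_) (neg_le_abs _)
    ring
  have key : Real.sqrt 3 * (-x.1/2 + Real.sqrt 3 * x.2/2)
      = -(Real.sqrt 3 * x.1)/2 + 3 * x.2/2 := by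
    linear_combination (x.2/2) * sqrt3_sq
  have h4 : Real.sqrt 3 * x.1 ≤ Real.sqrt 3 * |x.1| :=
    mul_le_mul_of_nonneg_left (le_abs_self _) sqrt3_pos.le
  linarith


/-! cone disjointness -/

private lemma relz (i j : ℕ) (c p : Pt) :
    rel i c p = rot (2*Real.pi*j/3 - 2*Real.pi*i/3) (rel j c p) := by
  rw [rel, rel, rot_rot]
  congr 1
  ring

private lemma rel_shift (i j : ℕ) (c p : Pt) (δ : ℝ)
    (hδ : 2*Real.pi*(j:ℝ)/3 - 2*Real.pi*(i:ℝ)/3 = δ) :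
    rel i c p = rot δ (rel j c p) := by rw [relz i j c p, hδ]

private lemma pos_pos_eq {c p : Pt} {i j : ℕ} (hi : i < 3) (hj : j < 3)
    (h1 : inPos i c p) (h2 : inPos j c p) : i = j := by
  rw [inPos_def] at h1 h2
  interval_cases i <;> interval_cases j <;> try rfl
  · rw [rel_shift 0 1 c p (2*Real.pi/3) (by push_cast; ring), rot_p1] at h1
    exact absurd h1 (cvec_not_P h2)
  · rw [rel_shift 0 2 c p (4*Real.pi/3) (by push_cast; ring), rot_p2] at h1
    exact absurd h1 (cvec_not_M h2)
  · rw [rel_shift 1 0 c p (-(2*Real.pi/3)) (by push_cast; ring), rot_m1] at h1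
    exact absurd h1 (cvec_not_M h2)
  · rw [rel_shift 1 2 c p (2*Real.pi/3) (by push_cast; ring), rot_p1] at h1
    exact absurd h1 (cvec_not_P h2)
  · rw [rel_shift 2 0 c p (-(4*Real.pi/3)) (by push_cast; ring), rot_m2] at h1
    exact absurd h1 (cvec_not_P h2)
  · rw [rel_shift 2 1 c p (-(2*Real.pi/3)) (by push_cast; ring), rot_m1] at h1
    exact absurd h1 (cvec_not_M h2)

private lemma pos_neg_false {c p : Pt} {i j : ℕ} (hi : i < 3) (hj : j < 3)
    (h1 : inPos j c p) (h2 : inNeg i c p) : False := by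
  have h2' : cvec (- rel i c p) := by
    have h3 : cvec (rel i p c) := h2
    rwa [rel_neg' i p c] at h3
  rw [inPos_def] at h1
  interval_cases i <;> interval_cases j
  · exact cvec_not_neg h1 h2'
  · rw [rel_shift 0 1 c p (2*Real.pi/3) (by push_cast; ring), rot_p1] at h2'
    exact cvec_not_negP h1 h2'
  · rw [rel_shift 0 2 c p (4*Real.pi/3) (by push_cast; ring), rot_p2] at h2'
    exact cvec_not_negM h1 h2'
  · rw [rel_shift 1 0 c p (-(2*Real.pi/3)) (by push_cast; ring), rot_m1] at h2'
    exact cvec_not_negM h1 h2'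
  · exact cvec_not_neg h1 h2'
  · rw [rel_shift 1 2 c p (2*Real.pi/3) (by push_cast; ring), rot_p1] at h2'
    exact cvec_not_negP h1 h2'
  · rw [rel_shift 2 0 c p (-(4*Real.pi/3)) (by push_cast; ring), rot_m2] at h2'
    exact cvec_not_negP h1 h2'
  · rw [rel_shift 2 1 c p (-(2*Real.pi/3)) (by push_cast; ring), rot_m1] at h2'
    exact cvec_not_negM h1 h2'
  · exact cvec_not_neg h1 h2'

/-! collinearity bridge -/

private lemma collinear_of_cross {p q r : Pt} (h : crossP (q - p) (r - p) = 0) :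
    Collinear ℝ ({p, q, r} : Set Pt) := by
  rcases eq_or_ne q p with heq | hqp
  · rw [heq]
    have hset : ({p, p, r} : Set Pt) = {p, r} := by
      ext z; simp [Set.mem_insert_iff]
    rw [hset]
    exact collinear_pair ℝ p r
  · apply (collinear_iff_of_mem (Set.mem_insert p {q, r})).mpr
    refine ⟨q - p, fun z hz => ?_⟩
    simp only [Set.mem_insert_iff, Set.mem_singleton_iff] at hz
    rcases hz with rfl | rfl | rfl
    · exact ⟨0, by simp⟩
    · exact ⟨1, by simp⟩
    · have hcr : (q - p).1 * (z - p).2 - (q - p).2 * (z - p).1 = 0 := h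
      have hqp0 : q - p ≠ 0 := sub_ne_zero.mpr hqp
      by_cases h1 : (q - p).1 = 0
      · have h2 : (q - p).2 ≠ 0 := by
          intro h2
          exact hqp0 (Prod.ext_iff.mpr ⟨by simpa using h1, by simpa using h2⟩)
        have hr1 : (z - p).1 = 0 := by
          have h3 : (q - p).2 * (z - p).1 = 0 := by rw [h1] at hcr; linarith
          rcases mul_eq_zero.mp h3 with h' | h'
          · exact absurd h' h2
          · exact h'
        refine ⟨(z - p).2 / (q - p).2, ?_⟩
        have e2 : (z - p).2 / (q - p).2 * (q - p).2 = (z - p).2 := div_mul_cancel₀ _ h2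
        rw [vadd_eq_add]
        have c1 : (((z - p).2 / (q - p).2) • (q - p) + p).1 = z.1 := by
          simp only [Prod.fst_add, Prod.smul_fst, smul_eq_mul, h1, mul_zero, zero_add]
          have h4 : z.1 - p.1 = 0 := hr1
          linarith
        have c2 : (((z - p).2 / (q - p).2) • (q - p) + p).2 = z.2 := by
          simp only [Prod.snd_add, Prod.smul_snd, smul_eq_mul]
          rw [e2]
          simp [Prod.snd_sub]
        exact (Prod.ext c1 c2).symm
      · refine ⟨(z - p).1 / (q - p).1, ?_⟩
        have e1 : (z - p).1 / (q - p).1 * (q - p).1 = (z - p).1 := div_mul_cancel₀ _ h1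
        have e2 : (z - p).1 / (q - p).1 * (q - p).2 = (z - p).2 := by
          rw [div_mul_eq_mul_div, eq_comm, eq_div_iff h1]
          nlinarith [hcr]
        rw [vadd_eq_add]
        have c1 : (((z - p).1 / (q - p).1) • (q - p) + p).1 = z.1 := by
          simp only [Prod.fst_add, Prod.smul_fst, smul_eq_mul]
          rw [e1]
          simp [Prod.fst_sub]
        have c2 : (((z - p).1 / (q - p).1) • (q - p) + p).2 = z.2 := by
          simp only [Prod.snd_add, Prod.smul_snd, smul_eq_mul]
          rw [e2]
          simp [Prod.snd_sub]
        exact (Prod.ext c1 c2).symm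

/-! segments -/

private lemma mem_os {q a b : Pt} (h : q ∈ openSegment ℝ a b) :
    ∃ t : ℝ, 0 < t ∧ t < 1 ∧ q = a + t • (b - a) := by
  rw [openSegment_eq_image'] at h
  obtain ⟨t, ht, rfl⟩ := h
  exact ⟨t, ht.1, ht.2, rfl⟩

private lemma os_mem {a b : Pt} {t : ℝ} (h0 : 0 < t) (h1 : t < 1) :
    a + t • (b - a) ∈ openSegment ℝ a b := by
  rw [openSegment_eq_image']
  exact ⟨t, ⟨h0, h1⟩, rfl⟩

private lemma pcross_symm {a b c d : Pt} (h : PCross a b c d) : PCross a b d c := by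
  obtain ⟨q, h1, h2⟩ := h
  exact ⟨q, h1, by rw [openSegment_symm]; exact h2⟩

private lemma no_cross {S : Set (Pt × Pt)}
    (hSnc : ∀ c ∈ S, ∀ d ∈ S, c ≠ d → ¬ PCross c.1 c.2 d.1 d.2)
    {a b : Pt} (hsee : CanSee S a b) {e : Pt × Pt} (he : e ∈ S)
    (h1 : e ≠ (a, b)) (h2 : e ≠ (b, a)) : ¬ PCross e.1 e.2 a b := by
  rcases hsee with hc | hall
  · rcases hc with hab | hba
    · exact hSnc e he (a, b) hab h1
    · intro hP
      exact hSnc e he (b, a) hba h2 (pcross_symm hP)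
  · exact hall e he

/-! real interval helpers -/

private lemma btw_trans {a b p q : ℝ} (h1 : (p-a)*(p-q) < 0) (h2 : (q-a)*(q-b) ≤ 0) :
    (p-a)*(p-b) < 0 := by
  rcases mul_neg_iff.mp h1 with ⟨u1,u2⟩|⟨u1,u2⟩
  · have hqb : q - b ≤ 0 := by nlinarith
    exact mul_neg_of_pos_of_neg u1 (by linarith)
  · have hqb : 0 ≤ q - b := by nlinarith
    have : 0 < p - b := by linarith
    nlinarith
  
private lemma lamf_spec {fa fq : ℝ} (lam : ℝ) (hq0 : 0 ≤ fq) (himp : fa < 0 → 0 < fq)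
    (hlam : lam = if fa < 0 then -fa / (fq - fa) else 0) :
    0 ≤ lam ∧ lam < 1 ∧
    (∀ l, lam ≤ l → l ≤ 1 → 0 ≤ (1 - l) * fa + l * fq) ∧
    (fa < 0 → (1 - lam) * fa + lam * fq = 0 ∧ 0 < lam) := by
  by_cases h : fa < 0
  · rw [if_pos h] at hlam
    have hfq := himp h
    have hden : 0 < fq - fa := by linarith
    have hlpos : 0 < lam := by rw [hlam]; exact div_pos (by linarith) hden
    refine ⟨hlpos.le, ?_, ?_, fun _ => ⟨?_, hlpos⟩⟩
    · rw [hlam, div_lt_one hden]; linarith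
    · intro l hl hl1
      have e : (1 - l) * fa + l * fq = fa + l * (fq - fa) := by ring
      rw [e]
      have h3 : lam * (fq - fa) ≤ l * (fq - fa) := mul_le_mul_of_nonneg_right hl hden.le
      rw [hlam, div_mul_cancel₀ _ hden.ne'] at h3
      linarith
    · rw [hlam]
      field_simp
      ring
  · rw [if_neg h] at hlam
    push_neg at h
    subst hlam
    refine ⟨le_refl 0, one_pos, fun l hl hl1 => ?_, fun h' => absurd h' (not_lt.mpr h)⟩
    have g1 : 0 ≤ (1-l) * fa := mul_nonneg (by linarith) h
    have g2 : 0 ≤ l * fq := mul_nonneg hl hq0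
    linarith

private lemma sign_div {A B s t : ℝ} (hA : 0 < A) (hB : 0 < B) :
    0 < (A * s) / (B * t) ↔ 0 < s * t := by
  rcases lt_trichotomy t 0 with h|h|h
  · rw [div_pos_iff]
    constructor
    · rintro (⟨h1,h2⟩|⟨h1,h2⟩)
      · nlinarith
      · nlinarith
    · intro hst
      right
      constructor <;> nlinarith
  · simp [h]
  · rw [div_pos_iff]
    constructor
    · rintro (⟨h1,h2⟩|⟨h1,h2⟩)
      · nlinarith
      · nlinarith
    · intro hst
      left
      constructor <;> nlinarith


/-! slope order -/

private def sg (i : ℕ) (c p : Pt) : ℝ := (rel i c p).1 / (rel i c p).2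

private lemma cross_sg {i : ℕ} {c p q : Pt} (hp : inPos i c p) (hq : inPos i c q) :
    crossP (p - c) (q - c) = projLen i c p * projLen i c q * (sg i c p - sg i c q) := by
  have hyp : (rel i c p).2 ≠ 0 := (cvec_pos hp).ne'
  have hyq : (rel i c q).2 ≠ 0 := (cvec_pos hq).ne'
  have h1 : crossP (p - c) (q - c) = crossP (rel i c p) (rel i c q) := by
    rw [rel, rel, crossP_rot]
  rw [h1]
  simp only [projLen, sg, crossP]
  field_simp

private lemma sign_transfer {Y1 Y2 s1 s2 : ℝ} (h1 : 0 < Y1) (h2 : 0 < Y2)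
    (h : (Y1 * s1) * (Y2 * s2) < 0) : s1 * s2 < 0 := by
  by_contra h'
  push_neg at h'
  nlinarith [mul_nonneg (mul_pos h1 h2).le h']

private lemma sign_transfer_pos {Y1 Y2 s1 s2 : ℝ} (h1 : 0 < Y1) (h2 : 0 < Y2)
    (h : 0 < (Y1 * s1) * (Y2 * s2)) : 0 < s1 * s2 := by
  by_contra h'
  push_neg at h'
  nlinarith [mul_nonneg (mul_pos h1 h2).le (neg_nonneg.mpr h')]

private lemma cross_sg_eq {i : ℕ} {c p q : Pt} (hp : inPos i c p) (hq : inPos i c q) :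
    crossP (p - c) (q - c) = 0 ↔ sg i c p = sg i c q := by
  rw [cross_sg hp hq]
  have h1 := projLen_pos hp
  have h2 := projLen_pos hq
  constructor
  · intro h
    rcases mul_eq_zero.mp h with h' | h'
    · exact absurd h' (by positivity)
    · linarith [sub_eq_zero.mp h']
  · intro h
    rw [h]
    ring

/-! real interval helpers (continued) -/

private lemma btw_sides {a b p : ℝ} (h : (p - a) * (p - b) < 0) :
    0 < (a - p) * (a - b) ∧ 0 < (p - b) * (a - b) := by
  rcases mul_neg_iff.mp h with ⟨h1,h2⟩|⟨h1,h2⟩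
  · constructor <;> nlinarith
  · constructor <;> nlinarith

private lemma btw_flip {a b x : ℝ} (h1 : 0 < (a - x) * (a - b)) (h2 : 0 < (x - b) * (a - b)) :
    (x - a) * (x - b) < 0 := by
  rcases lt_or_gt_of_ne (show a - b ≠ 0 by rintro h; rw [h] at h1; simp at h1) with h | h
  · have g1 : a - x < 0 := by nlinarith
    have g2 : x - b < 0 := by nlinarith
    nlinarith
  · have g1 : 0 < a - x := by nlinarith
    have g2 : 0 < x - b := by nlinarith
    nlinarith

private lemma btw_side2 {u d x a : ℝ} (h1 : (a - u) * (a - d) < 0)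
    (h2 : (x - u) * (x - d) ≤ 0) (h3 : 0 < (x - a) * (x - u)) :
    (a - u) * (a - x) < 0 := by
  rcases mul_pos_iff.mp h3 with ⟨g1,g2⟩|⟨g1,g2⟩ <;>
    rcases mul_neg_iff.mp h1 with ⟨f1,f2⟩|⟨f1,f2⟩
  · exact mul_neg_of_pos_of_neg f1 (by linarith)
  · exfalso; nlinarith
  · exfalso; nlinarith
  · exact mul_neg_of_neg_of_pos f1 (by linarith)

/-! barycentric coordinates -/

private def bbf (u c d p : Pt) : ℝ := crossP (p - c) (d - c) / crossP (u - c) (d - c)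
private def ggf (u c d p : Pt) : ℝ := crossP (u - c) (p - c) / crossP (u - c) (d - c)

private lemma crossP_self (a : Pt) : crossP a a = 0 := by simp [crossP]; ring

private lemma cross_comb {U D : Pt} {a1 a2 b1 b2 : ℝ} :
    crossP (a1 • U + a2 • D) (b1 • U + b2 • D) = (a1 * b2 - a2 * b1) * crossP U D := by
  simp only [crossP, Prod.fst_add, Prod.snd_add, Prod.smul_fst, Prod.smul_snd, smul_eq_mul]
  ring

private lemma bary_rep {u c d : Pt} (hK : crossP (u - c) (d - c) ≠ 0) (p : Pt) :
    p - c = bbf u c d p • (u - c) + ggf u c d p • (d - c) := by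
  apply Prod.ext
  · simp only [Prod.fst_add, Prod.smul_fst, smul_eq_mul, bbf, ggf]
    rw [div_mul_eq_mul_div, div_mul_eq_mul_div, ← add_div, eq_div_iff hK]
    simp only [crossP, Prod.fst_sub, Prod.snd_sub]
    ring
  · simp only [Prod.snd_add, Prod.smul_snd, smul_eq_mul, bbf, ggf]
    rw [div_mul_eq_mul_div, div_mul_eq_mul_div, ← add_div, eq_div_iff hK]
    simp only [crossP, Prod.fst_sub, Prod.snd_sub]
    ring

private lemma sub_rep {u c d : Pt} (hK : crossP (u - c) (d - c) ≠ 0) (p q : Pt) :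
    p - q = (bbf u c d p - bbf u c d q) • (u - c) + (ggf u c d p - ggf u c d q) • (d - c) := by
  have h1 := bary_rep hK p
  have h2 := bary_rep hK q
  have h3 : p - q = (p - c) - (q - c) := by abel
  rw [h3, h1, h2, sub_smul, sub_smul]
  abel

private lemma cross_bary {u c d : Pt} (hK : crossP (u - c) (d - c) ≠ 0) (p q r s : Pt) :
    crossP (p - q) (r - s) =
      ((bbf u c d p - bbf u c d q) * (ggf u c d r - ggf u c d s) -
       (ggf u c d p - ggf u c d q) * (bbf u c d r - bbf u c d s)) * crossP (u - c) (d - c) := by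
  rw [sub_rep hK p q, sub_rep hK r s, cross_comb]

private lemma bbf_aff (u c d a q : Pt) (l : ℝ) :
    bbf u c d (a + l • (q - a)) = (1 - l) * bbf u c d a + l * bbf u c d q := by
  have h : crossP (a + l • (q - a) - c) (d - c)
      = (1 - l) * crossP (a - c) (d - c) + l * crossP (q - c) (d - c) := by
    simp only [crossP, Prod.fst_add, Prod.snd_add, Prod.fst_sub, Prod.snd_sub,
      Prod.smul_fst, Prod.smul_snd, smul_eq_mul]
    ring
  simp only [bbf, h, add_div, mul_div_assoc]

private lemma ggf_aff (u c d a q : Pt) (l : ℝ) :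
    ggf u c d (a + l • (q - a)) = (1 - l) * ggf u c d a + l * ggf u c d q := by
  have h : crossP (u - c) (a + l • (q - a) - c)
      = (1 - l) * crossP (u - c) (a - c) + l * crossP (u - c) (q - c) := by
    simp only [crossP, Prod.fst_add, Prod.snd_add, Prod.fst_sub, Prod.snd_sub,
      Prod.smul_fst, Prod.smul_snd, smul_eq_mul]
    ring
  simp only [ggf, h, add_div, mul_div_assoc]

private lemma bbf_u {u c d : Pt} (hK : crossP (u - c) (d - c) ≠ 0) : bbf u c d u = 1 :=
  div_self hK

private lemma ggf_u (u c d : Pt) : ggf u c d u = 0 := by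
  simp [ggf, crossP_self]

private lemma bbf_d (u c d : Pt) : bbf u c d d = 0 := by
  simp [bbf, crossP_self]

private lemma ggf_d {u c d : Pt} (hK : crossP (u - c) (d - c) ≠ 0) : ggf u c d d = 1 :=
  div_self hK

private lemma bbf_c (u c d : Pt) : bbf u c d c = 0 := by
  have : c - c = (0 : Pt) := by abel
  simp [bbf, this, crossP, Prod.fst_zero, Prod.snd_zero]

private lemma ggf_c (u c d : Pt) : ggf u c d c = 0 := by
  have : c - c = (0 : Pt) := by abel
  simp [ggf, this, crossP, Prod.fst_zero, Prod.snd_zero]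

private lemma rel_bary {i : ℕ} {u c d : Pt} (hK : crossP (u - c) (d - c) ≠ 0) (p : Pt) :
    rel i c p = bbf u c d p • rel i c u + ggf u c d p • rel i c d := by
  show rot (-(2*Real.pi*i/3)) (p - c) = _
  rw [bary_rep hK p, rot_add, rot_smul, rot_smul]
  rfl

private lemma cone_of_bary {i : ℕ} {u c d p : Pt} (hcu : inPos i c u) (hcd : inPos i c d)
    (hK : crossP (u - c) (d - c) ≠ 0) (hb : 0 < bbf u c d p) (hg : 0 < ggf u c d p) :
    inPos i c p := by
  rw [inPos_def, rel_bary hK p]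
  exact cvec_comb hcu hcd hb hg

private lemma projLen_bary {i : ℕ} {u c d : Pt} (hK : crossP (u - c) (d - c) ≠ 0) (p : Pt) :
    projLen i c p = bbf u c d p * projLen i c u + ggf u c d p * projLen i c d := by
  rw [projLen, rel_bary hK p]
  simp only [Prod.snd_add, Prod.smul_snd, smul_eq_mul, projLen]

private lemma ggf_pos_iff {i : ℕ} {u c d p : Pt} (hcu : inPos i c u) (hcd : inPos i c d)
    (hp : inPos i c p) :
    (0 < ggf u c d p ↔ 0 < (sg i c u - sg i c p) * (sg i c u - sg i c d)) := by
  rw [ggf, cross_sg hcu hp, cross_sg hcu hcd]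
  exact sign_div (mul_pos (projLen_pos hcu) (projLen_pos hp))
    (mul_pos (projLen_pos hcu) (projLen_pos hcd))

private lemma bbf_pos_iff {i : ℕ} {u c d p : Pt} (hcu : inPos i c u) (hcd : inPos i c d)
    (hp : inPos i c p) :
    (0 < bbf u c d p ↔ 0 < (sg i c p - sg i c d) * (sg i c u - sg i c d)) := by
  rw [bbf, cross_sg hp hcd, cross_sg hcu hcd]
  exact sign_div (mul_pos (projLen_pos hp) (projLen_pos hcd))
    (mul_pos (projLen_pos hcu) (projLen_pos hcd))

/-! graph helpers -/

private lemma cansee_symm {S : Set (Pt × Pt)} {a b : Pt} (h : CanSee S a b) : CanSee S b a := by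
  rcases h with h | h
  · exact Or.inl h.symm
  · exact Or.inr fun e he hp => h e he (pcross_symm hp)

private lemma ssneg_symm {S : Set (Pt × Pt)} {i : ℕ} {u p q : Pt}
    (h : SameSubNeg S i u p q) : SameSubNeg S i u q p :=
  fun z h1 h2 h3 => h z h1 h2 (by rwa [mul_comm] at h3)

private lemma gp_cross {P : Set Pt} (hGP : GenPos P) {p q r : Pt}
    (hp : p ∈ P) (hq : q ∈ P) (hr : r ∈ P)
    (h1 : p ≠ q) (h2 : q ≠ r) (h3 : p ≠ r) : crossP (q - p) (r - p) ≠ 0 :=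
  fun h => hGP.2 p hp q hq r hr h1 h2 h3 (collinear_of_cross h)

private lemma hedge_neg {P : Set Pt} {S : Set (Pt × Pt)} {u v : Pt} {i : ℕ} (hi : i < 3)
    (h : HEdge P S u v) (hneg : inNeg i u v) :
    CanSee S v u ∧ ∀ x ∈ P, x ≠ v → inPos i v x → CanSee S v x → SameSubPos S i v u x →
      projLen i v u ≤ projLen i v x := by
  rcases h with h | h
  · obtain ⟨_, _, j, hj, hpos, _⟩ := h
    exact (pos_neg_false hi hj hpos hneg).elim
  · obtain ⟨_, _, j, hj, hpos, hsee, hmin⟩ := h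
    have hij : j = i := pos_pos_eq hj hi hpos hneg
    subst hij
    exact ⟨hsee, hmin⟩


private lemma crossP_smul_right (X Y : Pt) (t : ℝ) : crossP X (t • Y) = t * crossP X Y := by
  simp only [crossP, Prod.smul_fst, Prod.smul_snd, smul_eq_mul]
  ring

private lemma crossP_smul_left (X Y : Pt) (t : ℝ) : crossP (t • X) Y = t * crossP X Y := by
  simp only [crossP, Prod.smul_fst, Prod.smul_snd, smul_eq_mul]
  ring

private lemma crossP_add_right (X Y Z : Pt) : crossP X (Y + Z) = crossP X Y + crossP X Z := by
  simp only [crossP, Prod.fst_add, Prod.snd_add]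
  ring

private lemma crossP_add_left (X Y Z : Pt) : crossP (X + Y) Z = crossP X Z + crossP Y Z := by
  simp only [crossP, Prod.fst_add, Prod.snd_add]
  ring


private lemma not_sq_neg {A : ℝ} : ¬ (A * A < 0) := not_lt.mpr (mul_self_nonneg A)

private lemma star_helper {E G K : ℝ} (hG : 0 < G) (hK2 : 0 < K * K)
    (h : 0 < E * K * -(G * K)) : E < 0 := by nlinarith [mul_pos hG hK2]

private lemma p1_helper {t B G : ℝ} (ht0 : 0 < t) (ht1 : t < 1) (hB : 0 ≤ B) (hG : 0 < G)
    (hs : B + G ≤ 1) : 0 < 1 - t * (B + G) := by nlinarith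

private lemma p1_helper' {t B G : ℝ} (ht0 : 0 < t) (ht1 : t < 1) (hB : 0 ≤ B) (hG : 0 < G)
    (hs : B + G ≤ 1) : 0 < 1 - t * B - t * G := by nlinarith

private lemma prod_helper {a b K : ℝ} (ha : 0 < a) (hb : 0 < b) (hK2 : 0 < K * K) :
    a * K * (b * -K) < 0 := by nlinarith [mul_pos (mul_pos ha hb) hK2]

private lemma had_helper {B G : ℝ} (h : B * 1 - G * 0 < 0) (hB : 0 ≤ B) : False := by nlinarith

private lemma f2imp_helper {G B Ga : ℝ} (h : 0 * Ga - G * B < 0) (hG : 0 < G) (hB : B < 0) :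
    False := by nlinarith

private lemma hopp_helper {s A B : ℝ} (h2 : s * (A * B) = -((1 - s) * (A * A)))
    (hA2 : 0 < A * A) (hs0 : 0 < s) (hs1 : s < 1) : A * B < 0 := by nlinarith

private lemma dispatch_pos {A B W : ℝ} (h : 0 < A * B * (A * W)) (hA2 : 0 < A * A) :
    0 < B * W := by nlinarith

private lemma dispatch_neg {A B W : ℝ} (h : A * B * (A * W) < 0) (hA2 : 0 < A * A) :
    B * W < 0 := by nlinarith

private lemma hAK_helper {E K : ℝ} (hE : E < 0) (hK2 : 0 < K * K) : E * K * K < 0 := by nlinarith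

private lemma hge_helper {B G X K : ℝ} (hB : 0 ≤ B) (hG : 0 ≤ G) :
    0 ≤ (B * G - X * 0) * K * K := by
  have h1 : 0 ≤ B * G * (K * K) := mul_nonneg (mul_nonneg hB hG) (mul_self_nonneg K)
  nlinarith [h1]

private lemma ls_lt_one {L s : ℝ} (h1 : L < 1) (h2 : 0 < s) (h3 : s < 1) (h0 : 0 < L) :
    L * s < 1 := by nlinarith

private lemma sum_lt_one {B G : ℝ} (h : 0 < 1 - B - G) : B + G < 1 := by linarith

private lemma lt_one_helper {B G : ℝ} (h : 0 < 1 - B - G) (hG : G = 0) : B < 1 := by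
  rw [hG] at h; linarith

private lemma f3_lt_helper {B G : ℝ} (h : 1 - B - G = 0) (hB : 0 < B) : G < 1 := by linarith

set_option maxHeartbeats 2000000 in
private lemma main_lemma
    (P : Set Pt) (S : Set (Pt × Pt)) (hPfin : P.Finite)
    (hSP : ∀ e ∈ S, e.1 ∈ P ∧ e.2 ∈ P)
    (hSnc : ∀ e ∈ S, ∀ f ∈ S, e ≠ f → ¬ PCross e.1 e.2 f.1 f.2)
    (hGP : GenPos P)
    (u c d : Pt) (i : ℕ)
    (hu : u ∈ P) (hc : c ∈ P) (hd : d ∈ P)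
    (hcu : inPos i c u) (hcd : inPos i c d) (hdu : inPos i d u)
    (hCu : CanSee S c u) (hDu : CanSee S d u)
    (hSS : SameSubNeg S i u c d)
    (hmin : ∀ x ∈ P, x ≠ c → inPos i c x → CanSee S c x → SameSubPos S i c u x →
      projLen i c u ≤ projLen i c x) : False := by
  have huc : u ≠ c := inPos_ne hcu
  have hdc : d ≠ c := inPos_ne hcd
  have hud : u ≠ d := inPos_ne hdu
  have hK : crossP (u - c) (d - c) ≠ 0 :=
    gp_cross hGP hc hu hd (Ne.symm huc) hud (Ne.symm hdc)
  have hKud : crossP (d - u) (c - u) ≠ 0 :=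
    gp_cross hGP hu hd hc hud hdc huc
  have hK2 : 0 < crossP (u - c) (d - c) * crossP (u - c) (d - c) := by
    rcases hK.lt_or_gt with h | h
    exacts [mul_pos_of_neg_of_neg h h, mul_pos h h]
  have hplu : 0 < projLen i c u := projLen_pos hcu
  have hpld : 0 < projLen i c d := projLen_pos hcd
  have hpldu : projLen i c d < projLen i c u := by
    have h1 := projLen_add i c d u
    have h2 := projLen_pos hdu
    linarith
  -- candidate predicate
  set Cd : Pt → Prop := fun x => x ∈ P ∧ (x = d ∨
    (0 < bbf u c d x ∧ 0 < ggf u c d x ∧ bbf u c d x + ggf u c d x < 1)) with hCdDef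
  have candF : ∀ x, Cd x → x ∈ P ∧ inPos i c x ∧ x ≠ c ∧ projLen i c x < projLen i c u ∧
      0 ≤ bbf u c d x ∧ 0 < ggf u c d x ∧ bbf u c d x + ggf u c d x ≤ 1 ∧
      (sg i c x - sg i c u) * (sg i c x - sg i c d) ≤ 0 := by
    rintro x ⟨hxP, rfl | ⟨hb, hg, hs⟩⟩
    · refine ⟨hxP, hcd, inPos_ne hcd, hpldu, ?_, ?_, ?_, ?_⟩
      · rw [bbf_d]
      · rw [ggf_d hK]; norm_num
      · rw [bbf_d, ggf_d hK]; norm_num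
      · simp [sub_self]
    · have hx : inPos i c x := cone_of_bary hcu hcd hK hb hg
      refine ⟨hxP, hx, inPos_ne hx, ?_, hb.le, hg, hs.le, ?_⟩
      · rw [projLen_bary hK x]
        nlinarith [hplu, hpld, hpldu, hb, hg, hs]
      · have h1 : 0 < (sg i c u - sg i c x) * (sg i c u - sg i c d) :=
          (ggf_pos_iff hcu hcd hx).mp hg
        have h2 : 0 < (sg i c x - sg i c d) * (sg i c u - sg i c d) :=
          (bbf_pos_iff hcu hcd hx).mp hb
        exact (btw_flip h1 h2).le
  -- the measure
  set M : Pt → Set Pt := fun x =>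
    {z | z ∈ P ∧ inPos i c z ∧ (sg i c z - sg i c u) * (sg i c z - sg i c x) < 0} with hMdef
  have hMfin : ∀ x, (M x).Finite := fun x => hPfin.subset (fun z hz => hz.1)
  have hmu : ∀ x x', x' ∈ P → inPos i c x' →
      (sg i c x' - sg i c u) * (sg i c x' - sg i c x) < 0 →
      (M x').ncard < (M x).ncard := by
    intro x x' hP' hpos' hbt
    have hsub : M x' ⊆ M x := by
      rintro z ⟨h1, h2, h3⟩
      exact ⟨h1, h2, btw_trans h3 hbt.le⟩
    have hmem : x' ∈ M x := ⟨hP', hpos', hbt⟩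
    have hnmem : x' ∉ M x' := by
      rintro ⟨_, _, h0⟩
      simp [sub_self] at h0
    exact Set.ncard_lt_ncard ((Set.ssubset_iff_of_subset hsub).mpr ⟨x', hmem, hnmem⟩) (hMfin x)
  -- the inductive step
  have step : ∀ x, Cd x → ∃ x', Cd x' ∧
      (sg i c x' - sg i c u) * (sg i c x' - sg i c x) < 0 := by
    intro x hx
    obtain ⟨hxP, hxpos, hxc, hxlt, hbx, hgx, hsx, hsgx⟩ := candF x hx
    have hnotboth : ¬ (CanSee S c x ∧ SameSubPos S i c u x) := by
      rintro ⟨h1, h2⟩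
      exact absurd (hmin x hxP hxc hxpos h1 h2) (not_le.mpr hxlt)
    by_cases hsee : CanSee S c x
    · -- visibility holds, subcone condition must fail
      have h2 : ¬ SameSubPos S i c u x := fun h => hnotboth ⟨hsee, h⟩
      unfold SameSubPos SameSubIn at h2
      push_neg at h2
      obtain ⟨z, hzC, hzpos, hzlt⟩ := h2
      have hzP : z ∈ P := by
        rcases hzC with h | h
        exacts [(hSP _ h).2, (hSP _ h).1]
      have hsz : (sg i c z - sg i c u) * (sg i c z - sg i c x) < 0 := by
        rw [cross_sg hzpos hcu, cross_sg hzpos hxpos] at hzlt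
        exact sign_transfer (mul_pos (projLen_pos hzpos) (projLen_pos hcu))
          (mul_pos (projLen_pos hzpos) (projLen_pos hxpos)) hzlt
      have hszd : (sg i c z - sg i c u) * (sg i c z - sg i c d) < 0 := btw_trans hsz hsgx
      obtain ⟨hgsz', hbsz'⟩ := btw_sides hszd
      have hgz : 0 < ggf u c d z := (ggf_pos_iff hcu hcd hzpos).mpr hgsz'
      have hbz : 0 < bbf u c d z := (bbf_pos_iff hcu hcd hzpos).mpr hbsz'
      rcases lt_trichotomy (bbf u c d z + ggf u c d z) 1 with hlt1 | heq1 | hgt1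
      · exact ⟨z, ⟨hzP, Or.inr ⟨hbz, hgz, hlt1⟩⟩, hsz⟩
      · -- z lies on the line ud : contradiction with general position
        exfalso
        have hzu : z ≠ u := by
          intro h
          rw [h] at hsz
          simp [sub_self] at hsz
        have hzd : z ≠ d := by
          intro h
          rw [h] at hszd
          simp [sub_self] at hszd
        have hcross : crossP (d - u) (z - u) = 0 := by
          rw [cross_bary hK d u z u, bbf_d, bbf_u hK, ggf_d hK, ggf_u]
          have he : ((0:ℝ) - 1) * (ggf u c d z - 0) - (1 - 0) * (bbf u c d z - 1)
              = 1 - (bbf u c d z + ggf u c d z) := by ring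
          rw [he, heq1, sub_self, zero_mul]
        exact gp_cross hGP hu hd hzP hud (Ne.symm hzd) (Ne.symm hzu) hcross
      · -- the constraint cz crosses the open segment ud
        exfalso
        have hsum : (0:ℝ) < bbf u c d z + ggf u c d z := by linarith
        set τ : ℝ := 1 / (bbf u c d z + ggf u c d z) with hτdef
        have hτ0 : 0 < τ := by rw [hτdef]; positivity
        have hτ1 : τ < 1 := by rw [hτdef, div_lt_one hsum]; linarith
        have hτs : τ * (bbf u c d z + ggf u c d z) = 1 := by
          rw [hτdef]; field_simp
        have hp1 : c + τ • (z - c) ∈ openSegment ℝ c z := os_mem hτ0 hτ1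
        have hα0 : 0 < τ * ggf u c d z := mul_pos hτ0 hgz
        have hα1 : τ * ggf u c d z < 1 := by nlinarith [hbz, hτ0]
        have hzrep := bary_rep hK z
        have ez1 : (z - c).1 = bbf u c d z * (u - c).1 + ggf u c d z * (d - c).1 := by
          rw [hzrep]
          simp [Prod.fst_add, Prod.smul_fst, smul_eq_mul]
        have ez2 : (z - c).2 = bbf u c d z * (u - c).2 + ggf u c d z * (d - c).2 := by
          rw [hzrep]
          simp [Prod.snd_add, Prod.smul_snd, smul_eq_mul]
        have heqp : c + τ • (z - c) = u + (τ * ggf u c d z) • (d - u) := by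
          apply Prod.ext
          · simp only [Prod.fst_add, Prod.smul_fst, smul_eq_mul, Prod.fst_sub] at ez1 ⊢
            linear_combination τ * ez1 + (u.1 - c.1) * hτs
          · simp only [Prod.snd_add, Prod.smul_snd, smul_eq_mul, Prod.snd_sub] at ez2 ⊢
            linear_combination τ * ez2 + (u.2 - c.2) * hτs
        have hp2 : c + τ • (z - c) ∈ openSegment ℝ d u := by
          rw [openSegment_symm, heqp]
          exact os_mem hα0 hα1
        have hPC : PCross c z d u := ⟨c + τ • (z - c), hp1, hp2⟩
        rcases hzC with hcz | hcz
        · exact no_cross hSnc hDu hcz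
            (fun h => hdc (congrArg Prod.fst h).symm)
            (fun h => huc (congrArg Prod.fst h).symm) hPC
        · have hPC' : PCross z c d u :=
            ⟨c + τ • (z - c), by rw [openSegment_symm]; exact hp1, hp2⟩
          exact no_cross hSnc hDu hcz
            (fun h => huc (congrArg Prod.snd h).symm)
            (fun h => hdc (congrArg Prod.snd h).symm) hPC'
    · -- visibility fails
      unfold CanSee at hsee
      push_neg at hsee
      obtain ⟨hnC, e, heS, hePC⟩ := hsee
      obtain ⟨q, hqe, hqcx⟩ := hePC
      obtain ⟨t, ht0, ht1, htq⟩ := mem_os hqcx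
      have hDq : crossP (x - c) (q - c) = 0 := by
        rw [htq, add_sub_cancel_left, crossP_smul_right, crossP_self, mul_zero]
      have hqc : q ≠ c := by
        rw [htq]
        intro h
        have h0 : t • (x - c) = 0 := by rwa [add_eq_left] at h
        rcases smul_eq_zero.mp h0 with h' | h'
        · exact ht0.ne' h'
        · exact hxc (sub_eq_zero.mp h')
      have hqx : q ≠ x := by
        rw [htq]
        intro h
        have h1 : t • (x - c) = x - c := by
          have h2 := congrArg (fun y => y - c) h
          simpa [add_sub_cancel_left] using h2
        have h0 : (t - 1) • (x - c) = 0 := by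
          rw [sub_smul, one_smul, h1, sub_self]
        rcases smul_eq_zero.mp h0 with h' | h'
        · exact ht1.ne (sub_eq_zero.mp h')
        · exact hxc (sub_eq_zero.mp h')
      have honline : ∀ w, w ∈ P → crossP (x - c) (w - c) = 0 → w ≠ c → w ≠ x → False := by
        intro w hwP hw h1 h2
        exact hGP.2 c hc x hxP w hwP (Ne.symm hxc) (Ne.symm h2) (Ne.symm h1)
          (collinear_of_cross hw)
      have hend : ∀ a b : Pt, ((a, b) ∈ S ∨ (b, a) ∈ S) → q ∈ openSegment ℝ a b →
          crossP (x - c) (a - c) = 0 → False := by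
        intro a b hab hq hDa
        have haP : a ∈ P := by rcases hab with h | h; exacts [(hSP _ h).1, (hSP _ h).2]
        have hbP : b ∈ P := by rcases hab with h | h; exacts [(hSP _ h).2, (hSP _ h).1]
        obtain ⟨s, hs0, hs1, hsq⟩ := mem_os hq
        by_cases hac : a = c
        · rw [hac] at hsq hab
          have hDb : crossP (x - c) (b - c) = 0 := by
            have h2 : c + s • (b - c) = c + t • (x - c) := hsq.symm.trans htq
            have h1 : s • (b - c) = t • (x - c) := add_left_cancel h2
            have h3 := congrArg (fun Y => crossP (x - c) Y) h1
            simp only [crossP_smul_right, crossP_self, mul_zero] at h3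
            rcases mul_eq_zero.mp h3 with h' | h'
            · exact absurd h' hs0.ne'
            · exact h'
          by_cases hbx : b = x
          · exact hnC (by rcases hab with h | h; exacts [Or.inl (hbx ▸ h), Or.inr (hbx ▸ h)])
          · have hbc : b ≠ c := by
              intro h
              apply hqc
              rw [hsq, h, sub_self, smul_zero, add_zero]
            exact honline b hbP hDb hbc hbx
        · by_cases hax : a = x
          · rw [hax] at hsq hab
            have hDb : crossP (x - c) (b - c) = 0 := by
              have e1 : q - x = s • (b - x) := by rw [hsq, add_sub_cancel_left]
              have e2 : q - x = (t - 1) • (x - c) := by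
                rw [htq, sub_smul, one_smul]
                apply Prod.ext <;>
                  simp only [Prod.fst_add, Prod.snd_add, Prod.fst_sub, Prod.snd_sub,
                    Prod.smul_fst, Prod.smul_snd, smul_eq_mul] <;> ring
              have h1 : crossP (x - c) (s • (b - x)) = crossP (x - c) ((t - 1) • (x - c)) := by
                rw [← e1, e2]
              rw [crossP_smul_right, crossP_smul_right, crossP_self, mul_zero] at h1
              have h2 : crossP (x - c) (b - x) = 0 := by
                rcases mul_eq_zero.mp h1 with h' | h'
                · exact absurd h' hs0.ne'
                · exact h'
              have h3 : b - c = (b - x) + (x - c) := by abel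
              rw [h3, crossP_add_right, h2, crossP_self, add_zero]
            by_cases hbc : b = c
            · exact hnC (by rcases hab with h | h; exacts [Or.inr (hbc ▸ h), Or.inl (hbc ▸ h)])
            · have hbx : b ≠ x := by
                intro h
                apply hqx
                rw [hsq, h, sub_self, smul_zero, add_zero]
              exact honline b hbP hDb hbc hbx
          · exact honline a haP hDa hac hax
      have hsxu : sg i c x ≠ sg i c u := by
        intro h
        have h1 := (ggf_pos_iff hcu hcd hxpos).mp hgx
        rw [h] at h1
        simp [sub_self] at h1
      have hW : crossP (x - c) (u - c) ≠ 0 := fun h => hsxu ((cross_sg_eq hxpos hcu).mp h)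
      have hDa : crossP (x - c) (e.1 - c) ≠ 0 := fun h =>
        hend e.1 e.2 (Or.inl (by simpa using heS)) hqe h
      have hDb : crossP (x - c) (e.2 - c) ≠ 0 := fun h =>
        hend e.2 e.1 (Or.inr (by simpa using heS))
          (by rw [openSegment_symm]; exact hqe) h
      obtain ⟨s, hs0, hs1, hsq⟩ := mem_os hqe
      have hA2 : 0 < crossP (x - c) (e.1 - c) * crossP (x - c) (e.1 - c) := by
        rcases hDa.lt_or_gt with h | h
        exacts [mul_pos_of_neg_of_neg h h, mul_pos h h]
      have haff : (1 - s) * crossP (x - c) (e.1 - c) + s * crossP (x - c) (e.2 - c) = 0 := by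
        have h1 : crossP (x - c) (q - c)
            = (1 - s) * crossP (x - c) (e.1 - c) + s * crossP (x - c) (e.2 - c) := by
          rw [hsq]
          simp only [crossP, Prod.fst_add, Prod.snd_add, Prod.fst_sub, Prod.snd_sub,
            Prod.smul_fst, Prod.smul_snd, smul_eq_mul]
          ring
        rw [← h1, hDq]
      have hopp : crossP (x - c) (e.1 - c) * crossP (x - c) (e.2 - c) < 0 := by
        have haff2 : s * (crossP (x - c) (e.1 - c) * crossP (x - c) (e.2 - c))
            = -((1 - s) * (crossP (x - c) (e.1 - c) * crossP (x - c) (e.1 - c))) := by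
          linear_combination crossP (x - c) (e.1 - c) * haff
        exact hopp_helper haff2 hA2 hs0 hs1
      have hsideP : ∀ a b : Pt, ((a, b) ∈ S ∨ (b, a) ∈ S) → ∀ s' : ℝ, 0 < s' → s' < 1 →
          q = a + s' • (b - a) →
          crossP (x - c) (a - c) ≠ 0 → crossP (x - c) (b - c) ≠ 0 →
          0 < crossP (x - c) (a - c) * crossP (x - c) (u - c) →
          crossP (x - c) (b - c) * crossP (x - c) (u - c) < 0 →
          ∃ x', Cd x' ∧ (sg i c x' - sg i c u) * (sg i c x' - sg i c x) < 0 := by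
        intro a b hab s' hs0' hs1' hsq' hDa' hDb' hAW hBW
        have haP : a ∈ P := by rcases hab with h | h; exacts [(hSP _ h).1, (hSP _ h).2]
        have hbP : b ∈ P := by rcases hab with h | h; exacts [(hSP _ h).2, (hSP _ h).1]
        have hac : a ≠ c := by
          intro h
          apply hDa'
          rw [h, sub_self]
          simp [crossP]
        have hax : a ≠ x := fun h => hDa' (by rw [h]; exact crossP_self _)
        have hbc : b ≠ c := by
          intro h
          apply hDb'
          rw [h, sub_self]
          simp [crossP]
        have hbx2 : b ≠ x := fun h => hDb' (by rw [h]; exact crossP_self _)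
        have hbu : b ≠ u := by
          intro h
          rw [h] at hBW
          exact not_sq_neg hBW
        have hab_ne : a ≠ b := by
          intro h
          rw [h] at hAW
          exact (lt_asymm hAW) hBW
        have hKA : crossP (x - c) (a - c)
            = (bbf u c d x * ggf u c d a - ggf u c d x * bbf u c d a)
                * crossP (u - c) (d - c) := by
          rw [cross_bary hK x c a c, bbf_c, ggf_c]
          ring
        have hKW : crossP (x - c) (u - c) = -(ggf u c d x * crossP (u - c) (d - c)) := by
          rw [cross_bary hK x c u c, bbf_c, ggf_c, bbf_u hK, ggf_u]
          ring
        have hstar : bbf u c d x * ggf u c d a - ggf u c d x * bbf u c d a < 0 := by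
          rw [hKA, hKW] at hAW
          exact star_helper hgx hK2 hAW
        by_cases hau : a = u
        · exfalso
          rw [hau] at hsq' hab
          have hxrep := bary_rep hK x
          have ex1 : (x - c).1 = bbf u c d x * (u - c).1 + ggf u c d x * (d - c).1 := by
            rw [hxrep]; simp [Prod.fst_add, Prod.smul_fst, smul_eq_mul]
          have ex2 : (x - c).2 = bbf u c d x * (u - c).2 + ggf u c d x * (d - c).2 := by
            rw [hxrep]; simp [Prod.snd_add, Prod.smul_snd, smul_eq_mul]
          have hp1 : 0 < 1 - t * (bbf u c d x + ggf u c d x) := p1_helper ht0 ht1 hbx hgx hsx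
          have hr1 : 0 < t * ggf u c d x := mul_pos ht0 hgx
          have hqu : q - u = (1 - t * (bbf u c d x + ggf u c d x)) • (c - u)
              + (t * ggf u c d x) • (d - u) := by
            rw [htq]
            apply Prod.ext
            · simp only [Prod.fst_add, Prod.fst_sub, Prod.smul_fst, smul_eq_mul] at ex1 ⊢
              linear_combination t * ex1
            · simp only [Prod.snd_add, Prod.snd_sub, Prod.smul_snd, smul_eq_mul] at ex2 ⊢
              linear_combination t * ex2
          have hqu2 : q - u = s' • (b - u) := by rw [hsq', add_sub_cancel_left]
          have hbu2 : b - u = s'⁻¹ • (q - u) := by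
            rw [hqu2, smul_smul, inv_mul_cancel₀ hs0'.ne', one_smul]
          have hneg : inNeg i u b := by
            show inPos i b u
            rw [inPos_def]
            have h2 : u - b = (s'⁻¹ * (1 - t * (bbf u c d x + ggf u c d x))) • (u - c)
                + (s'⁻¹ * (t * ggf u c d x)) • (u - d) := by
              have h3 : u - b = -(b - u) := by abel
              rw [h3, hbu2, hqu]
              apply Prod.ext <;>
                simp only [Prod.fst_add, Prod.snd_add, Prod.fst_sub, Prod.snd_sub, Prod.fst_neg,
                  Prod.snd_neg, Prod.smul_fst, Prod.smul_snd, smul_eq_mul] <;> ring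
            have h3 : rel i b u = (s'⁻¹ * (1 - t * (bbf u c d x + ggf u c d x))) • rel i c u
                + (s'⁻¹ * (t * ggf u c d x)) • rel i d u := by
              show rot (-(2*Real.pi*i/3)) (u - b) = _
              rw [h2, rot_add, rot_smul, rot_smul]
              rfl
            rw [h3]
            exact cvec_comb hcu hdu (mul_pos (inv_pos.mpr hs0') hp1)
              (mul_pos (inv_pos.mpr hs0') hr1)
          have hc1 : crossP (b - u) (c - u)
              = s'⁻¹ * (t * ggf u c d x) * crossP (d - u) (c - u) := by
            rw [hbu2, hqu, crossP_smul_left, crossP_add_left, crossP_smul_left,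
              crossP_smul_left, crossP_self]
            ring
          have hc2 : crossP (b - u) (d - u)
              = s'⁻¹ * (1 - t * (bbf u c d x + ggf u c d x)) * crossP (c - u) (d - u) := by
            rw [hbu2, hqu, crossP_smul_left, crossP_add_left, crossP_smul_left,
              crossP_smul_left, crossP_self]
            ring
          have hanti : crossP (c - u) (d - u) = -crossP (d - u) (c - u) := by
            simp only [crossP]; ring
          have hKK2 : 0 < crossP (d - u) (c - u) * crossP (d - u) (c - u) := by
            rcases hKud.lt_or_gt with h | h
            exacts [mul_pos_of_neg_of_neg h h, mul_pos h h]
          have hprod : crossP (b - u) (c - u) * crossP (b - u) (d - u) < 0 := by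
            rw [hc1, hc2, hanti]
            have h5 : 0 < s'⁻¹ := inv_pos.mpr hs0'
            exact prod_helper (mul_pos h5 hr1) (mul_pos h5 hp1) hKK2
          exact hSS b hab hneg hprod
        · have had : a ≠ d := by
            intro h'
            rw [h', ggf_d hK, bbf_d] at hstar
            exact had_helper hstar hbx
          have hGa0 : ggf u c d a ≠ 0 := by
            intro h
            have h0 : crossP (u - c) (a - c) = 0 := by
              have h1 := h
              rw [ggf] at h1
              rcases div_eq_zero_iff.mp h1 with h' | h'
              · exact h'
              · exact absurd h' hK
            exact hGP.2 c hc u hu a haP (Ne.symm huc) (fun h' => hau h'.symm) (Ne.symm hac)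
              (collinear_of_cross h0)
          have hBa0 : bbf u c d a ≠ 0 := by
            intro h
            have h0 : crossP (a - c) (d - c) = 0 := by
              have h1 := h
              rw [bbf] at h1
              rcases div_eq_zero_iff.mp h1 with h' | h'
              · exact h'
              · exact absurd h' hK
            exact hGP.2 c hc a haP d hd (Ne.symm hac) had (Ne.symm hdc)
              (collinear_of_cross h0)
          have hF3a0 : 1 - bbf u c d a - ggf u c d a ≠ 0 := by
            intro h
            have h0 : crossP (d - u) (a - u) = 0 := by
              rw [cross_bary hK d u a u, bbf_d, bbf_u hK, ggf_d hK, ggf_u]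
              have he : ((0:ℝ) - 1) * (ggf u c d a - 0) - (1 - 0) * (bbf u c d a - 1)
                  = 1 - bbf u c d a - ggf u c d a := by ring
              rw [he, h, zero_mul]
            exact hGP.2 u hu d hd a haP hud (Ne.symm had) (fun h' => hau h'.symm)
              (collinear_of_cross h0)
          by_cases hInT : 0 < bbf u c d a ∧ 0 < ggf u c d a ∧ bbf u c d a + ggf u c d a < 1
          · have hapos : inPos i c a := cone_of_bary hcu hcd hK hInT.1 hInT.2.1
            have ha1 : (sg i c a - sg i c u) * (sg i c a - sg i c d) < 0 :=
              btw_flip ((ggf_pos_iff hcu hcd hapos).mp hInT.2.1)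
                ((bbf_pos_iff hcu hcd hapos).mp hInT.1)
            have hWpos : 0 < (sg i c x - sg i c a) * (sg i c x - sg i c u) := by
              rw [cross_sg hxpos hapos, cross_sg hxpos hcu] at hAW
              exact sign_transfer_pos (mul_pos (projLen_pos hxpos) (projLen_pos hapos))
                (mul_pos (projLen_pos hxpos) (projLen_pos hcu)) hAW
            exact ⟨a, ⟨haP, Or.inr hInT⟩, btw_side2 ha1 hsgx hWpos⟩
          · exfalso
            have hviol : ggf u c d a < 0 ∨ bbf u c d a < 0 ∨
                1 - bbf u c d a - ggf u c d a < 0 := by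
              by_contra hcon
              push_neg at hcon
              obtain ⟨v1, v2, v3⟩ := hcon
              exact hInT ⟨lt_of_le_of_ne v2 (Ne.symm hBa0),
                lt_of_le_of_ne v1 (Ne.symm hGa0),
                sum_lt_one (lt_of_le_of_ne v3 (Ne.symm hF3a0))⟩
            have hf1q : 0 < t * ggf u c d x := mul_pos ht0 hgx
            have hf3q : 0 < 1 - t * bbf u c d x - t * ggf u c d x :=
              p1_helper' ht0 ht1 hbx hgx hsx
            have hf2q : 0 ≤ t * bbf u c d x := mul_nonneg ht0.le hbx
            have hf2imp : bbf u c d a < 0 → 0 < t * bbf u c d x := by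
              intro h
              rcases hbx.lt_or_eq with h' | h'
              · exact mul_pos ht0 h'
              · exfalso
                rw [← h'] at hstar
                exact f2imp_helper hstar hgx h
            set l1 := if ggf u c d a < 0 then
              -(ggf u c d a) / (t * ggf u c d x - ggf u c d a) else 0 with hl1
            obtain ⟨l1_0, l1_1, l1mono, l1hit⟩ := lamf_spec l1 hf1q.le (fun _ => hf1q) hl1
            set l2 := if bbf u c d a < 0 then
              -(bbf u c d a) / (t * bbf u c d x - bbf u c d a) else 0 with hl2
            obtain ⟨l2_0, l2_1, l2mono, l2hit⟩ := lamf_spec l2 hf2q hf2imp hl2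
            set l3 := if 1 - bbf u c d a - ggf u c d a < 0 then
              -(1 - bbf u c d a - ggf u c d a) /
                (1 - t * bbf u c d x - t * ggf u c d x - (1 - bbf u c d a - ggf u c d a))
              else 0 with hl3
            obtain ⟨l3_0, l3_1, l3mono, l3hit⟩ := lamf_spec l3 hf3q.le (fun _ => hf3q) hl3
            set L := max l1 (max l2 l3) with hLdef
            have hLl1 : l1 ≤ L := le_max_left _ _
            have hLl2 : l2 ≤ L := le_trans (le_max_left _ _) (le_max_right _ _)
            have hLl3 : l3 ≤ L := le_trans (le_max_right _ _) (le_max_right _ _)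
            have hL1 : L < 1 := max_lt l1_1 (max_lt l2_1 l3_1)
            have hLpos : 0 < L := by
              rcases hviol with hv | hv | hv
              · exact lt_of_lt_of_le (l1hit hv).2 hLl1
              · exact lt_of_lt_of_le (l2hit hv).2 hLl2
              · exact lt_of_lt_of_le (l3hit hv).2 hLl3
            have hattain : (ggf u c d a < 0 ∧ L = l1) ∨ (bbf u c d a < 0 ∧ L = l2) ∨
                (1 - bbf u c d a - ggf u c d a < 0 ∧ L = l3) := by
              rcases max_choice l1 (max l2 l3) with h | h
              · left
                refine ⟨?_, by rw [hLdef]; exact h⟩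
                by_contra hcon
                have hl10 : l1 = 0 := by rw [hl1, if_neg hcon]
                exact hLpos.ne' (by rw [hLdef]; exact h.trans hl10)
              · rcases max_choice l2 l3 with h2 | h2
                · right; left
                  refine ⟨?_, by rw [hLdef]; exact h.trans h2⟩
                  by_contra hcon
                  have hl20 : l2 = 0 := by rw [hl2, if_neg hcon]
                  exact hLpos.ne' (by rw [hLdef]; exact (h.trans h2).trans hl20)
                · right; right
                  refine ⟨?_, by rw [hLdef]; exact h.trans h2⟩
                  by_contra hcon
                  have hl30 : l3 = 0 := by rw [hl3, if_neg hcon]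
                  exact hLpos.ne' (by rw [hLdef]; exact (h.trans h2).trans hl30)
            set m := a + L • (q - a) with hmdef
            have hgm : ggf u c d m = (1 - L) * ggf u c d a + L * (t * ggf u c d x) := by
              rw [hmdef, ggf_aff]
              have hq1 : ggf u c d q = t * ggf u c d x := by rw [htq, ggf_aff, ggf_c]; ring
              rw [hq1]
            have hbm : bbf u c d m = (1 - L) * bbf u c d a + L * (t * bbf u c d x) := by
              rw [hmdef, bbf_aff]
              have hq1 : bbf u c d q = t * bbf u c d x := by rw [htq, bbf_aff, bbf_c]; ring
              rw [hq1]
            have hgm0 : 0 ≤ ggf u c d m := by rw [hgm]; exact l1mono L hLl1 hL1.le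
            have hbm0 : 0 ≤ bbf u c d m := by rw [hbm]; exact l2mono L hLl2 hL1.le
            have hf3m0 : 0 ≤ 1 - bbf u c d m - ggf u c d m := by
              have h4 := l3mono L hLl3 hL1.le
              have e : (1 - L) * (1 - bbf u c d a - ggf u c d a)
                  + L * (1 - t * bbf u c d x - t * ggf u c d x)
                  = 1 - ((1 - L) * bbf u c d a + L * (t * bbf u c d x))
                    - ((1 - L) * ggf u c d a + L * (t * ggf u c d x)) := by ring
              rw [hbm, hgm, ← e]
              exact h4
            have hmab : m = a + (L * s') • (b - a) := by
              rw [hmdef, hsq', add_sub_cancel_left, smul_smul]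
            have hr1' : L * s' < 1 := ls_lt_one hL1 hs0' hs1' hLpos
            have hmopen : m ∈ openSegment ℝ a b := by
              rw [hmab]
              exact os_mem (mul_pos hLpos hs0') hr1'
            have hab_sub : b - a ≠ 0 := sub_ne_zero.mpr (Ne.symm hab_ne)
            have hOnAB : ∀ v : Pt, v ∈ P → m = v → False := by
              intro v hvP hvm
              have hr0 : 0 < L * s' := mul_pos hLpos hs0'
              have hcl : crossP (b - a) (v - a) = 0 := by
                rw [← hvm, hmab, add_sub_cancel_left, crossP_smul_right, crossP_self, mul_zero]
              have hva : v ≠ a := by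
                intro h
                have h0 : a + (L * s') • (b - a) = a := by rw [← hmab, hvm, h]
                have h1 : (L * s') • (b - a) = 0 := by rwa [add_eq_left] at h0
                rcases smul_eq_zero.mp h1 with h' | h'
                · exact hr0.ne' h'
                · exact hab_sub h'
              have hvb : v ≠ b := by
                intro h
                have h0 : a + (L * s') • (b - a) = b := by rw [← hmab, hvm, h]
                have h1 : (L * s') • (b - a) = b - a :=
                  eq_sub_iff_add_eq.mpr (by rwa [add_comm] at h0)
                have h2 : ((L * s') - 1) • (b - a) = 0 := by
                  rw [sub_smul, one_smul, h1, sub_self]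
                rcases smul_eq_zero.mp h2 with h' | h'
                · exact hr1'.ne (sub_eq_zero.mp h')
                · exact hab_sub h'
              exact hGP.2 a haP b hbP v hvP hab_ne (Ne.symm hvb) (Ne.symm hva)
                (collinear_of_cross hcl)
            have hmrep := bary_rep hK m
            have em1 : (m - c).1 = bbf u c d m * (u - c).1 + ggf u c d m * (d - c).1 := by
              rw [hmrep]; simp [Prod.fst_add, Prod.smul_fst, smul_eq_mul]
            have em2 : (m - c).2 = bbf u c d m * (u - c).2 + ggf u c d m * (d - c).2 := by
              rw [hmrep]; simp [Prod.snd_add, Prod.smul_snd, smul_eq_mul]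
            rcases hattain with ⟨hv, hLe⟩ | ⟨hv, hLe⟩ | ⟨hv, hLe⟩
            · have hGm0 : ggf u c d m = 0 := by
                rw [hgm, hLe]
                exact (l1hit hv).1
              rcases lt_or_eq_of_le hbm0 with hBmpos | hBm0
              · rcases lt_or_eq_of_le hf3m0 with hf3pos | hf30
                · have hBm1 : bbf u c d m < 1 := lt_one_helper hf3pos hGm0
                  have hmcu : m = c + bbf u c d m • (u - c) := by
                    have h1 : m - c = bbf u c d m • (u - c) := by
                      rw [hmrep, hGm0, zero_smul, add_zero]
                    exact sub_eq_iff_eq_add'.mp h1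
                  have hmem : m ∈ openSegment ℝ c u := by
                    rw [hmcu]; exact os_mem hBmpos hBm1
                  rcases hab with habS | habS
                  · exact no_cross hSnc hCu habS
                      (fun hh => hac (congrArg Prod.fst hh))
                      (fun hh => hau (congrArg Prod.fst hh)) ⟨m, hmopen, hmem⟩
                  · exact no_cross hSnc hCu habS
                      (fun hh => hbc (congrArg Prod.fst hh))
                      (fun hh => hbu (congrArg Prod.fst hh))
                      ⟨m, by rw [openSegment_symm]; exact hmopen, hmem⟩
                · have hBm1 : bbf u c d m = 1 := by linear_combination hf30 - hGm0
                  have hmu : m = u := by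
                    have h1 : m - c = u - c := by
                      rw [hmrep, hGm0, hBm1, zero_smul, add_zero, one_smul]
                    exact sub_left_inj.mp h1
                  exact hOnAB u hu hmu
              · have hmc : m = c := by
                  have h1 : m - c = 0 := by
                    rw [hmrep, hGm0, ← hBm0, zero_smul, zero_smul, add_zero]
                  exact sub_eq_zero.mp h1
                exact hOnAB c hc hmc
            · have hBm0' : bbf u c d m = 0 := by
                rw [hbm, hLe]
                exact (l2hit hv).1
              have hDm1 : crossP (x - c) (m - c) = (1 - L) * crossP (x - c) (a - c) := by
                have h1 : crossP (x - c) (m - c)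
                    = (1 - L) * crossP (x - c) (a - c) + L * crossP (x - c) (q - c) := by
                  rw [hmdef]
                  simp only [crossP, Prod.fst_add, Prod.snd_add, Prod.fst_sub, Prod.snd_sub,
                    Prod.smul_fst, Prod.smul_snd, smul_eq_mul]
                  ring
                rw [h1, hDq, mul_zero, add_zero]
              have hDm2 : crossP (x - c) (m - c)
                  = (bbf u c d x * ggf u c d m - ggf u c d x * bbf u c d m)
                      * crossP (u - c) (d - c) := by
                rw [cross_bary hK x c m c, bbf_c, ggf_c]
                ring
              have hAK : crossP (x - c) (a - c) * crossP (u - c) (d - c) < 0 := by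
                rw [hKA]
                exact hAK_helper hstar hK2
              have hge : 0 ≤ crossP (x - c) (m - c) * crossP (u - c) (d - c) := by
                rw [hDm2, hBm0']
                exact hge_helper hbx hgm0
              have hfin : crossP (x - c) (m - c) * crossP (u - c) (d - c)
                  = (1 - L) * (crossP (x - c) (a - c) * crossP (u - c) (d - c)) := by
                rw [hDm1]; ring
              have h6 := mul_neg_of_pos_of_neg (sub_pos.mpr hL1) hAK
              rw [← hfin] at h6
              exact (not_lt.mpr hge) h6
            · have hf3m : 1 - bbf u c d m - ggf u c d m = 0 := by
                have h1 : (1 - L) * (1 - bbf u c d a - ggf u c d a)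
                    + L * (1 - t * bbf u c d x - t * ggf u c d x) = 0 := by
                  rw [hLe]; exact (l3hit hv).1
                rw [hbm, hgm]
                linear_combination h1
              rcases lt_or_eq_of_le hbm0 with hBmpos | hBm0
              · rcases lt_or_eq_of_le hgm0 with hGmpos | hGm0
                · have hGm1 : ggf u c d m < 1 := f3_lt_helper hf3m hBmpos
                  have hsum1 : bbf u c d m + ggf u c d m = (1:ℝ) := by
                    linear_combination -hf3m
                  have hmud : m = u + ggf u c d m • (d - u) := by
                    apply Prod.ext
                    · simp only [Prod.fst_add, Prod.fst_sub, Prod.smul_fst, smul_eq_mul] at em1 ⊢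
                      linear_combination em1 + (u.1 - c.1) * hsum1
                    · simp only [Prod.snd_add, Prod.snd_sub, Prod.smul_snd, smul_eq_mul] at em2 ⊢
                      linear_combination em2 + (u.2 - c.2) * hsum1
                  have hmem : m ∈ openSegment ℝ u d := by
                    rw [hmud]; exact os_mem hGmpos hGm1
                  by_cases hbd : b = d
                  · rw [hbd] at hmab
                    have h0 : m - d = (1 - L * s') • (a - d) := by
                      rw [hmab]
                      apply Prod.ext <;>
                        simp only [Prod.fst_add, Prod.snd_add, Prod.fst_sub, Prod.snd_sub,
                          Prod.smul_fst, Prod.smul_snd, smul_eq_mul] <;> ring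
                    have h1 : m - d = (ggf u c d m - 1) • (d - u) := by
                      have h1' := congrArg (fun y : Pt => y - d) hmud
                      rw [h1']
                      apply Prod.ext <;>
                        simp only [Prod.fst_add, Prod.snd_add, Prod.fst_sub, Prod.snd_sub,
                          Prod.smul_fst, Prod.smul_snd, smul_eq_mul] <;> ring
                    have h3 := congrArg (fun Y => crossP Y (u - d)) (h0.symm.trans h1)
                    simp only [crossP_smul_left] at h3
                    have h4 : crossP (d - u) (u - d) = 0 := by
                      simp only [crossP, Prod.fst_sub, Prod.snd_sub, Prod.fst_add, Prod.snd_add,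
                        Prod.fst_neg, Prod.snd_neg]
                      ring
                    rw [h4, mul_zero] at h3
                    have h5 : crossP (a - d) (u - d) = 0 := by
                      rcases mul_eq_zero.mp h3 with h' | h'
                      · exact absurd h' (sub_pos.mpr hr1').ne'
                      · exact h'
                    exact hGP.2 d hd a haP u hu (Ne.symm had) hau (Ne.symm hud)
                      (collinear_of_cross h5)
                  · rcases hab with habS | habS
                    · exact no_cross hSnc hDu habS
                        (fun hh => had (congrArg Prod.fst hh))
                        (fun hh => hau (congrArg Prod.fst hh))
                        ⟨m, hmopen, by rw [openSegment_symm]; exact hmem⟩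
                    · exact no_cross hSnc hDu habS
                        (fun hh => hbd (congrArg Prod.fst hh))
                        (fun hh => hbu (congrArg Prod.fst hh))
                        ⟨m, by rw [openSegment_symm]; exact hmopen,
                          by rw [openSegment_symm]; exact hmem⟩
                · have hBm1 : bbf u c d m = 1 := by linear_combination -hf3m + hGm0
                  have hmu : m = u := by
                    have h1 : m - c = u - c := by
                      rw [hmrep, ← hGm0, hBm1, zero_smul, add_zero, one_smul]
                    exact sub_left_inj.mp h1
                  exact hOnAB u hu hmu
              · have hGm1 : ggf u c d m = 1 := by linear_combination -hf3m + hBm0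
                have hmd : m = d := by
                  have h1 : m - c = d - c := by
                    rw [hmrep, ← hBm0, hGm1, zero_smul, zero_add, one_smul]
                  exact sub_left_inj.mp h1
                exact hOnAB d hd hmd
      rcases lt_or_gt_of_ne (mul_ne_zero hDa hW) with hAW | hAW
      · have hBW : 0 < crossP (x - c) (e.2 - c) * crossP (x - c) (u - c) :=
          dispatch_pos (mul_pos_of_neg_of_neg hopp hAW) hA2
        have hq2 : q = e.2 + (1 - s) • (e.1 - e.2) := by
          rw [hsq]
          apply Prod.ext <;>
            simp only [Prod.fst_add, Prod.snd_add, Prod.fst_sub, Prod.snd_sub,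
              Prod.smul_fst, Prod.smul_snd, smul_eq_mul] <;> ring
        exact hsideP e.2 e.1 (Or.inr (by simpa using heS)) (1 - s) (by linarith) (by linarith)
          hq2 hDb hDa hBW hAW
      · have hBW : crossP (x - c) (e.2 - c) * crossP (x - c) (u - c) < 0 :=
          dispatch_neg (mul_neg_of_neg_of_pos hopp hAW) hA2
        exact hsideP e.1 e.2 (Or.inl (by simpa using heS)) s hs0 hs1 hsq hDa hDb hAW hBW
  -- wrap up : no candidate can exist, but d is one
  have noCd : ∀ n x, Cd x → (M x).ncard < n → False := by
    intro n
    induction n with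
    | zero => intro x _ h; exact absurd h (Nat.not_lt_zero _)
    | succ n ih =>
      intro x hx h
      obtain ⟨x', hx', hbt⟩ := step x hx
      have hlt := hmu x x' (candF x' hx').1 (candF x' hx').2.1 hbt
      exact ih x' hx' (by omega)
  exact noCd ((M d).ncard + 1) d ⟨hd, Or.inl rfl⟩ (by omega)

/-- **Corollary 2.** If `v` and `w` are consecutive vertices along a canonical path of `u`
in the negative cone `C̄ᵘᵢ`, then `w` lies neither in the positive cone `Cᵛᵢ` nor in the
negative cone `C̄ᵛᵢ` of `v`. -/
theorem stmt_12 (P : Set Pt) (S : Set (Pt × Pt)) (hPfin : P.Finite)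
    (hSP : ∀ c ∈ S, c.1 ∈ P ∧ c.2 ∈ P)
    (hSnc : ∀ c ∈ S, ∀ d ∈ S, c ≠ d → ¬ PCross c.1 c.2 d.1 d.2)
    (hGP : GenPos P)
    (u v w : Pt) (i : ℕ) (hi : i < 3)
    (hcc : ConsecCanon P S i u v w ∨ ConsecCanon P S i u w v) :
    ¬ inPos i v w ∧ ¬ inNeg i v w := by
  have hdata : CanonVert P S i u v ∧ CanonVert P S i u w ∧ SameSubNeg S i u v w := by
    rcases hcc with ⟨hv, hw, hss, _, _⟩ | ⟨hw, hv, hss, _, _⟩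
    · exact ⟨hv, hw, hss⟩
    · exact ⟨hv, hw, ssneg_symm hss⟩
  obtain ⟨⟨hvP, hvE, hvN⟩, ⟨hwP, hwE, hwN⟩, hssvw⟩ := hdata
  obtain ⟨hseeV, hminV⟩ := hedge_neg hi hvE hvN
  obtain ⟨hseeW, hminW⟩ := hedge_neg hi hwE hwN
  have huP : u ∈ P := by rcases hvE with h | h; exacts [h.1, h.2.1]
  constructor
  · intro hPos
    exact main_lemma P S hPfin hSP hSnc hGP u v w i huP hvP hwP hvN hPos hwN
      hseeV hseeW hssvw hminV
  · intro hNeg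
    exact main_lemma P S hPfin hSP hSnc hGP u w v i huP hwP hvP hwN hNeg hvN
      hseeW hseeV (ssneg_symm hssvw) hminW

end CHT6
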